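/- Let A ∈ ℝ^{n×n} be symmetric positive definite, let X ∈ ℝ^{n×n} be symmetric positive definite, and let S ∈ ℝ^{n×q} have full column rank. Set P := S (S^T A S)^{-1} S^T. Then the randomized BFGS update X⁺ := P + (I − P A) X (I − A P) is symmetric positive definite. -/

import Mathlib

open Matrix BigOperators

lemma dot_tr {n m : ℕ} (C : Matrix (Fin m) (Fin n) ℝ) (v : Fin n → ℝ) (z : Fin m → ℝ) :
    v ⬝ᵥ (Cᵀ *ᵥ z) = (C *ᵥ v) ⬝ᵥ z := by
  rw [dotProduct_mulVec, vecMul_transpose]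

lemma dot_tr' {n m : ℕ} (C : Matrix (Fin n) (Fin m) ℝ) (v : Fin n → ℝ) (z : Fin m → ℝ) :
    v ⬝ᵥ (C *ᵥ z) = (Cᵀ *ᵥ v) ⬝ᵥ z := by
  rw [← transpose_transpose C, dot_tr, transpose_transpose]

lemma ct_eq {n m : ℕ} (B : Matrix (Fin m) (Fin n) ℝ) : Bᴴ = Bᵀ := by
  simp [conjTranspose, Matrix.map, Matrix.transpose]

theorem stmt19 {n q : ℕ} (A X : Matrix (Fin n) (Fin n) ℝ)
    (S : Matrix (Fin n) (Fin q) ℝ)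
    (hA : A.PosDef) (hX : X.PosDef) (hS : S.rank = q) :
    let P := S * (Sᵀ * A * S)⁻¹ * Sᵀ
    (P + (1 - P * A) * X * (1 - A * P)).PosDef := by
  intro P
  set M := Sᵀ * A * S with hMdef
  have hSinj : Function.Injective (S.mulVec) := by
    have h := LinearMap.finrank_range_add_finrank_ker (S.mulVecLin)
    rw [← Matrix.rank, hS, Module.finrank_fin_fun] at h
    have hker : LinearMap.ker S.mulVecLin = ⊥ :=
      Submodule.finrank_eq_zero.mp (by omega)
    have := LinearMap.ker_eq_bot.mp hker
    rwa [Matrix.coe_mulVecLin] at this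
  have hAsymm : Aᵀ = A := by rw [← ct_eq]; exact hA.isHermitian
  have hMpd : M.PosDef := by
    refine posDef_iff_dotProduct_mulVec.mpr ⟨?_, ?_⟩
    · show Mᴴ = M
      rw [ct_eq, hMdef, transpose_mul, transpose_mul, transpose_transpose, hAsymm,
        Matrix.mul_assoc]
    · intro u hu
      have h1 : S *ᵥ u ≠ 0 := fun h => hu (hSinj (by simpa using h))
      have := hA.dotProduct_mulVec_pos h1
      simp only [star_trivial] at this ⊢
      rw [hMdef, Matrix.mul_assoc, ← mulVec_mulVec, dot_tr]
      rwa [← mulVec_mulVec]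
  have hMinv : M⁻¹.PosDef := hMpd.inv
  have hMsymm : Mᵀ = M := by rw [← ct_eq]; exact hMpd.isHermitian
  have hMinvsymm : (M⁻¹)ᵀ = M⁻¹ := by rw [transpose_nonsing_inv, hMsymm]
  have hPsymm : Pᵀ = P := by
    show (S * M⁻¹ * Sᵀ)ᵀ = S * M⁻¹ * Sᵀ
    rw [transpose_mul, transpose_mul, transpose_transpose, hMinvsymm, Matrix.mul_assoc]
  have hCt : (1 - A * P)ᵀ = 1 - P * A := by
    rw [transpose_sub, transpose_one, transpose_mul, hPsymm, hAsymm]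
  have hPpsd : P.PosSemidef := by
    have := hMinv.posSemidef.mul_mul_conjTranspose_same S
    rwa [ct_eq] at this
  have hTpsd : ((1 - P * A) * X * (1 - A * P)).PosSemidef := by
    have := hX.posSemidef.conjTranspose_mul_mul_same (1 - A * P)
    rwa [ct_eq, hCt] at this
  refine posDef_iff_dotProduct_mulVec.mpr ⟨(hPpsd.add hTpsd).isHermitian, fun v hv => ?_⟩
  simp only [star_trivial, add_mulVec, dotProduct_add]
  set y := Sᵀ *ᵥ v with hy
  set w := (1 - A * P) *ᵥ v with hw
  have hq1 : v ⬝ᵥ (P *ᵥ v) = y ⬝ᵥ (M⁻¹ *ᵥ y) := by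
    have h1 : P *ᵥ v = S *ᵥ (M⁻¹ *ᵥ y) := by
      show (S * M⁻¹ * Sᵀ) *ᵥ v = _
      rw [mulVec_mulVec, mulVec_mulVec]
    rw [h1, dot_tr']
  have hq2 : v ⬝ᵥ (((1 - P * A) * X * (1 - A * P)) *ᵥ v) = w ⬝ᵥ (X *ᵥ w) := by
    have h1 : ((1 - P * A) * X * (1 - A * P)) *ᵥ v = (1 - A * P)ᵀ *ᵥ (X *ᵥ w) := by
      rw [hCt, ← mulVec_mulVec, ← mulVec_mulVec]
    rw [h1, dot_tr]
  rw [hq1, hq2]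
  by_cases hy0 : y = 0
  · -- then P *ᵥ v = 0 and w = v
    have hPv : P *ᵥ v = 0 := by
      show (S * M⁻¹ * Sᵀ) *ᵥ v = 0
      rw [← mulVec_mulVec, ← hy, hy0, mulVec_zero]
    have hwv : w = v := by
      rw [hw, sub_mulVec, one_mulVec, ← mulVec_mulVec, hPv, mulVec_zero, sub_zero]
    have h2 : 0 < w ⬝ᵥ (X *ᵥ w) := by
      have := hX.dotProduct_mulVec_pos (x := w) (by rw [hwv]; exact hv)
      simpa using this
    have h1 : 0 ≤ y ⬝ᵥ (M⁻¹ *ᵥ y) := by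
      rw [hy0]; simp
    linarith
  · have h1 : 0 < y ⬝ᵥ (M⁻¹ *ᵥ y) := by
      have := hMinv.dotProduct_mulVec_pos hy0
      simpa using this
    have h2 : 0 ≤ w ⬝ᵥ (X *ᵥ w) := by
      have := hX.posSemidef.dotProduct_mulVec_nonneg w
      simpa using this
    linarith
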